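/- In the tree reduced instance, the vote counts in the full (unrestricted) election are: every candidate e ∈ U receives exactly m + 2 votes, candidate c receives exactly m + 2 votes, and candidate d receives exactly m + 1 − ℓ votes; that is, |τ⁻¹(e)| = m + 2 for each e ∈ U, |τ⁻¹(c)| = m + 2, and |τ⁻¹(d)| = m + 1 − ℓ. -/
import Mathlib


/-- Vertices of the tree reduced instance: for each `i ∈ [m]`, the path `P^(i)` has
vertices `v i j` (`j : Fin 3`, the vertices `v^(i)_1, v^(i)_2, v^(i)_3`), `u i k`
(`k : Fin (3ℓ)`, the vertices `u^(i)_1, …, u^(i)_{3ℓ}`) and `w i`; the path `P^#` has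
vertices `zh 0, zh 1`; the path `P^*` has vertices `zs t` for `t : Fin (m + 1 - ℓ)`
(all 0-indexed). -/
inductive VT (ℓ m : ℕ) : Type
  | v (i : Fin m) (j : Fin 3) : VT ℓ m
  | u (i : Fin m) (k : Fin (3 * ℓ)) : VT ℓ m
  | w (i : Fin m) : VT ℓ m
  | zh (j : Fin 2) : VT ℓ m
  | zs (t : Fin (m + 1 - ℓ)) : VT ℓ m
  deriving DecidableEq

/-- The candidate set `C = U ∪ {c, d}`, where `U = {1, …, 3ℓ}`. -/
inductive CandT (ℓ : ℕ) : Type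
  | elem (k : Fin (3 * ℓ)) : CandT ℓ
  | c : CandT ℓ
  | d : CandT ℓ
  deriving DecidableEq

/-- Base edge relation of the tree reduced instance: consecutive vertices of each path
`P^(i) = (v^(i)_1, v^(i)_2, v^(i)_3, u^(i)_1, …, u^(i)_{3ℓ}, w^(i))`, of
`P^# = (z#_1, z#_2)` and of `P^* = (z*_1, …, z*_{m+1−ℓ})` are adjacent, and the last
vertex `z*_{m+1−ℓ}` of `P^*` is joined to each head `v^(i)_1` and to `z#_1`. -/
def baseRelT (ℓ m : ℕ) : VT ℓ m → VT ℓ m → Prop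
  | .v i j, .v i' j' => i = i' ∧ (j : ℕ) + 1 = (j' : ℕ)
  | .v i j, .u i' k => i = i' ∧ (j : ℕ) = 2 ∧ (k : ℕ) = 0
  | .u i k, .u i' k' => i = i' ∧ (k : ℕ) + 1 = (k' : ℕ)
  | .u i k, .w i' => i = i' ∧ (k : ℕ) + 1 = 3 * ℓ
  | .zh j, .zh j' => (j : ℕ) + 1 = (j' : ℕ)
  | .zs t, .zs t' => (t : ℕ) + 1 = (t' : ℕ)
  | .zs t, .v _ j => (t : ℕ) + 1 = m + 1 - ℓ ∧ (j : ℕ) = 0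
  | .zs t, .zh j => (t : ℕ) + 1 = m + 1 - ℓ ∧ (j : ℕ) = 0
  | _, _ => False

/-- The tree of the tree reduced instance. -/
def GT (ℓ m : ℕ) : SimpleGraph (VT ℓ m) := SimpleGraph.fromRel (baseRelT ℓ m)

/-- The voting function, given an enumeration `e i 0, e i 1, e i 2` of the elements of
each set `S_i`: `v^(i)_j` votes for `e^(i)_j`, `u^(i)_k` votes for `k`, the `w^(i)` and
`z#`'s vote for `c`, and the `z*`'s vote for `d`. -/
def τT (ℓ m : ℕ) (e : Fin m → Fin 3 → Fin (3 * ℓ)) : VT ℓ m → CandT ℓ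
  | .v i j => CandT.elem (e i j)
  | .u _ k => CandT.elem k
  | .w _ => CandT.c
  | .zh _ => CandT.c
  | .zs _ => CandT.d

/-- The set `S_i`, recovered from the enumeration of its elements. -/
def SetT (ℓ m : ℕ) (e : Fin m → Fin 3 → Fin (3 * ℓ)) (i : Fin m) :
    Finset (Fin (3 * ℓ)) :=
  Finset.image (e i) Finset.univ

/-- The distinguished vertex `x = z*_1`. -/
def xT (ℓ m : ℕ) (h : 0 < m + 1 - ℓ) : VT ℓ m := VT.zs ⟨0, h⟩

/-- `HW G W x`: the set of vertices reachable from `x` in the subgraph of `G` induced on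
the complement of `W` (each step of a connecting walk must avoid `W`). -/
def HW {V : Type*} (G : SimpleGraph V) (W : Set V) (x : V) : Set V :=
  {z | Relation.ReflTransGen (fun a b => G.Adj a b ∧ a ∉ W ∧ b ∉ W) x z}

/-- Candidate `c` uniquely wins the election restricted to `W`: every other candidate
gets strictly fewer votes among the voters of `H_W`. -/
def winsT (ℓ m : ℕ) (e : Fin m → Fin 3 → Fin (3 * ℓ)) (x : VT ℓ m)
    (W : Set (VT ℓ m)) : Prop :=
  ∀ y : CandT ℓ, y ≠ CandT.c →
    (HW (GT ℓ m) W x ∩ τT ℓ m e ⁻¹' {y}).ncard <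
      (HW (GT ℓ m) W x ∩ τT ℓ m e ⁻¹' {CandT.c}).ncard

/-- Vote counts in the full (unrestricted) election of the tree reduced instance: every
candidate `e ∈ U` gets `m + 2` votes, candidate `c` gets `m + 2` votes, and candidate `d`
gets `m + 1 − ℓ` votes. -/
theorem tree_full_vote_counts (ℓ m : ℕ) (hℓ : 1 ≤ ℓ) (hm : ℓ ≤ m)
    (e : Fin m → Fin 3 → Fin (3 * ℓ))
    (hinj : ∀ i, Function.Injective (e i))
    (hcov : Finset.univ.biUnion (SetT ℓ m e) = Finset.univ)
    (htwo : ∀ k : Fin (3 * ℓ),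
      (Finset.univ.filter fun i => k ∈ SetT ℓ m e i).card = 2) :
    (∀ k : Fin (3 * ℓ), (τT ℓ m e ⁻¹' {CandT.elem k}).ncard = m + 2) ∧
    (τT ℓ m e ⁻¹' {CandT.c}).ncard = m + 2 ∧
    (τT ℓ m e ⁻¹' {CandT.d}).ncard = m + 1 - ℓ := by
  have injv : Function.Injective (fun p : Fin m × Fin 3 => (VT.v p.1 p.2 : VT ℓ m)) := by
    rintro ⟨a, b⟩ ⟨c, d⟩ h
    simp only [VT.v.injEq] at h
    simp [Prod.ext_iff, h.1, h.2]
  refine ⟨?_, ?_, ?_⟩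
  · intro k
    have hset : (τT ℓ m e ⁻¹' {CandT.elem k}) =
        ↑((((Finset.univ : Finset (Fin m × Fin 3)).filter fun p => e p.1 p.2 = k).image
            (fun p => (VT.v p.1 p.2 : VT ℓ m))) ∪
          (Finset.univ : Finset (Fin m)).image (fun i => (VT.u i k : VT ℓ m))) := by
      ext x
      cases x <;> simp [τT] <;> exact eq_comm
    rw [hset, Set.ncard_coe_finset, Finset.card_union_of_disjoint, Finset.card_image_of_injective _ injv, Finset.card_image_of_injective]
    · have h1 : ((Finset.univ : Finset (Fin m × Fin 3)).filter fun p => e p.1 p.2 = k).card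
          = ∑ i : Fin m, ((Finset.univ : Finset (Fin 3)).filter fun j => e i j = k).card := by
        rw [Finset.card_filter, Fintype.sum_prod_type]
        exact Finset.sum_congr rfl fun i _ => (Finset.card_filter _ _).symm
      have h2 : ∀ i : Fin m, ((Finset.univ : Finset (Fin 3)).filter fun j => e i j = k).card
          = if k ∈ SetT ℓ m e i then 1 else 0 := by
        intro i
        by_cases h : k ∈ SetT ℓ m e i
        · simp only [h, if_true]
          obtain ⟨j, -, hj⟩ := Finset.mem_image.mp h
          refine Finset.card_eq_one.mpr ⟨j, ?_⟩
          ext j'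
          simp only [Finset.mem_filter, Finset.mem_univ, true_and, Finset.mem_singleton]
          exact ⟨fun hj' => hinj i (hj'.trans hj.symm), fun hj' => hj' ▸ hj⟩
        · simp only [h, if_false, Finset.card_eq_zero, Finset.filter_eq_empty_iff]
          intro j _ hj
          exact h (Finset.mem_image.mpr ⟨j, Finset.mem_univ j, hj⟩)
      have h3 : ∑ i : Fin m, (if k ∈ SetT ℓ m e i then 1 else 0)
          = ((Finset.univ : Finset (Fin m)).filter fun i => k ∈ SetT ℓ m e i).card :=
        (Finset.card_filter _ _).symm
      simp only [h1, h2, h3, htwo k, Finset.card_univ, Fintype.card_fin]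
      omega
    · intro a b h
      simpa using h
    · simp only [Finset.disjoint_left, Finset.mem_image, Finset.mem_filter,
        Finset.mem_univ, true_and, not_exists, forall_exists_index, and_imp]
      rintro a p - rfl i h
      cases h
  · have hset : (τT ℓ m e ⁻¹' {CandT.c}) =
        ↑(((Finset.univ : Finset (Fin m)).image (fun i => (VT.w i : VT ℓ m))) ∪
          (Finset.univ : Finset (Fin 2)).image (fun j => (VT.zh j : VT ℓ m))) := by
      ext x
      cases x <;> simp [τT]
    rw [hset, Set.ncard_coe_finset, Finset.card_union_of_disjoint]
    · rw [Finset.card_image_of_injective, Finset.card_image_of_injective] <;>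
        first
          | simp
          | (intro a b h; simpa using h)
    · simp [Finset.disjoint_left]
  · have hset : (τT ℓ m e ⁻¹' {CandT.d}) =
        ↑((Finset.univ : Finset (Fin (m + 1 - ℓ))).image (fun t => (VT.zs t : VT ℓ m))) := by
      ext x
      cases x <;> simp [τT]
    rw [hset, Set.ncard_coe_finset, Finset.card_image_of_injective]
    · simp
    · intro a b h; simpa using h
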